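/- For all integers n ≥ 0 and k ≥ 0, ∑_{j=0}^{n} (-1)^{n-j} binom(n+k+j, n-j) C_j^{(k+1)} = (if n = 0 then 1 else 0), as an identity in ℚ. -/

import Mathlib

/-- `C n k` is the number `C_n^{(k)} = (k/(2n+k))·binom(2n+k, n)` as a rational number. -/
def genCatalan (n k : ℕ) : ℚ :=
  ((k : ℚ) / ((2 * n + k : ℕ) : ℚ)) * (Nat.choose (2 * n + k) n : ℚ)

open Nat Finset

private lemma lemA (m d : ℕ) :
    ((m+1)*(m+2) : ℚ) * (Nat.choose (m+d+2) d : ℚ)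
      = ((d+1)*(m+d+2)) * (Nat.choose (m+d+1) (d+1) : ℚ) := by
  rw [Nat.cast_choose ℚ (by omega : d ≤ m+d+2),
      Nat.cast_choose ℚ (by omega : d+1 ≤ m+d+1),
      show m+d+2-d = m+2 from by omega, show m+d+1-(d+1) = m from by omega]
  have f1 : (m+d+2)! = (m+d+2)*(m+d+1)! := by
    rw [show m+d+2 = (m+d+1)+1 from by omega, Nat.factorial_succ]
  have f2 : (m+2)! = (m+2)*(m+1)*(m)! := by
    rw [show m+2 = (m+1)+1 from by omega, Nat.factorial_succ, Nat.factorial_succ]; ring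
  have f3 : (d+1)! = (d+1)*(d)! := Nat.factorial_succ d
  have h1 : ((d)! : ℚ) ≠ 0 := by positivity
  have h2 : ((m)! : ℚ) ≠ 0 := by positivity
  have h3 : ((m+d+1)! : ℚ) ≠ 0 := by positivity
  rw [f1, f2, f3]
  push_cast
  field_simp

private lemma lemB (j k : ℕ) :
    ((j+1)*(j+k+2) : ℚ) * genCatalan (j+1) (k+1)
      = ((2*j+k+1)*(2*j+k+2)) * genCatalan j (k+1) := by
  unfold genCatalan
  rw [show 2*(j+1)+(k+1) = 2*j+k+3 from by omega, show 2*j+(k+1) = 2*j+k+1 from by omega]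
  rw [Nat.cast_choose ℚ (by omega : j+1 ≤ 2*j+k+3),
      Nat.cast_choose ℚ (by omega : j ≤ 2*j+k+1),
      show 2*j+k+3-(j+1) = j+k+2 from by omega, show 2*j+k+1-j = j+k+1 from by omega]
  have f1 : (2*j+k+3)! = (2*j+k+3)*(2*j+k+2)*(2*j+k+1)! := by
    rw [show 2*j+k+3 = (2*j+k+2)+1 from by omega, Nat.factorial_succ,
        show 2*j+k+2 = (2*j+k+1)+1 from by omega, Nat.factorial_succ]; ring
  have f2 : (j+1)! = (j+1)*(j)! := Nat.factorial_succ j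
  have f3 : (j+k+2)! = (j+k+2)*(j+k+1)! := by
    rw [show j+k+2 = (j+k+1)+1 from by omega, Nat.factorial_succ]
  have h1 : ((j)! : ℚ) ≠ 0 := by positivity
  have h2 : ((j+k+1)! : ℚ) ≠ 0 := by positivity
  have h3 : ((2*j+k+1)! : ℚ) ≠ 0 := by positivity
  have h4 : ((2*j+k+1 : ℕ) : ℚ) ≠ 0 := by positivity
  have h5 : ((2*j+k+3 : ℕ) : ℚ) ≠ 0 := by positivity
  rw [f1, f2, f3]
  push_cast
  field_simp

/-- Combination of `lemA` and `lemB`. -/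
private lemma lemC (j k d : ℕ) :
    ((j+1)*(j+k+2) : ℚ) * ((Nat.choose (2*j+k+d+2) d : ℚ) * genCatalan (j+1) (k+1))
      = ((d+1)*(2*j+k+d+2)) * ((Nat.choose (2*j+k+d+1) (d+1) : ℚ) * genCatalan j (k+1)) := by
  have h0 : ((2*j+k+1)*(2*j+k+2) : ℚ) ≠ 0 := by positivity
  apply mul_left_cancel₀ h0
  have hA := lemA (2*j+k) d
  have hB := lemB j k
  have := congrArg₂ (· * ·) hA hB
  push_cast at this ⊢
  linear_combination this

theorem stmt_3 (n k : ℕ) :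
    ∑ j ∈ Finset.range (n + 1),
        (-1 : ℚ) ^ (n - j) * (Nat.choose (n + k + j) (n - j) : ℚ) * genCatalan j (k + 1)
      = if n = 0 then 1 else 0 := by
  rcases n with _ | m
  · simp only [if_pos rfl, Finset.sum_range_one]
    have : ((k : ℚ) + 1) ≠ 0 := by positivity
    simp [genCatalan]
    field_simp
    exact this
  · rw [if_neg (by omega)]
    set n := m + 1 with hn
    have hD : ((n : ℚ) * (n + k + 1)) ≠ 0 := by positivity
    set g : ℕ → ℚ := fun j =>
      -((j : ℚ) * (j + k + 1)) / ((n : ℚ) * (n + k + 1)) *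
        ((-1 : ℚ) ^ (n - j) * (Nat.choose (n + k + j) (n - j) : ℚ) * genCatalan j (k + 1))
      with hg
    have step : ∀ j ∈ Finset.range n,
        (-1 : ℚ) ^ (n - j) * (Nat.choose (n + k + j) (n - j) : ℚ) * genCatalan j (k + 1)
          = g (j + 1) - g j := by
      intro j hj
      rw [Finset.mem_range] at hj
      obtain ⟨d, hd⟩ : ∃ d, m = j + d := ⟨m - j, by omega⟩
      subst hd
      simp only [hg]
      rw [show n - j = d + 1 from by omega, show n - (j+1) = d from by omega,
          show n + k + j = 2*j+k+d+1 from by omega,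
          show n + k + (j+1) = 2*j+k+d+2 from by omega]
      have hC := lemC j k d
      have hpow : (-1 : ℚ) ^ (d + 1) = -(-1 : ℚ) ^ d := by ring
      rw [hpow]
      have hncast : ((n : ℚ)) = (j : ℚ) + d + 1 := by push_cast [hn]; ring
      rw [hncast] at hD ⊢
      rw [div_mul_eq_mul_div, div_mul_eq_mul_div, div_sub_div_same, eq_div_iff hD]
      push_cast
      linear_combination ((-1:ℚ)^d) * hC
    have last :
        (-1 : ℚ) ^ (n - n) * (Nat.choose (n + k + n) (n - n) : ℚ) * genCatalan n (k + 1)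
          = - g n := by
      simp only [hg, Nat.sub_self]
      field_simp
      rw [mul_div_assoc, div_self (by rw [hn]; push_cast; positivity), mul_one]
    rw [Finset.sum_range_succ, Finset.sum_congr rfl step, Finset.sum_range_sub g, last]
    simp [hg]
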